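/- With the Cartier operator C on rational differentials of a function field F of characteristic p: for any h ∈ F^×, C(dh/h) = dh/h. That is, logarithmic differentials are fixed by the Cartier operator. -/

import Mathlib

open Polynomial

section CartierAux

lemma aux_coeff_id {p : ℕ} (hp : p.Prime) {A : Type*} [CommRing A] [IsDomain A] [CharZero A]
    (T : A[X]) (q : ℕ) :
    (T ^ (p - 1) * derivative T).coeff (q * p + (p - 1))
      = (q + 1 : A) * (T ^ p).coeff ((q + 1) * p) := by
  have hp1 : p - 1 + 1 = p := Nat.succ_pred_eq_of_pos hp.pos
  have hm : q * p + (p - 1) + 1 = (q + 1) * p := by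
    rw [add_assoc, hp1, add_one_mul]
  have h1 : derivative (T ^ p) = C (p : A) * (T ^ (p - 1) * derivative T) := by
    rw [derivative_pow, mul_assoc]
  have h2 : (derivative (T ^ p)).coeff (q * p + (p - 1))
      = (C (p : A) * (T ^ (p - 1) * derivative T)).coeff (q * p + (p - 1)) := by rw [h1]
  rw [coeff_derivative, coeff_C_mul, hm] at h2
  have hsc : ((q * p + (p - 1) : ℕ) : A) + 1 = (((q + 1) * p : ℕ) : A) := by
    exact_mod_cast congrArg (Nat.cast (R := A)) hm
  rw [hsc] at h2
  apply mul_left_cancel₀ (show (p : A) ≠ 0 by exact_mod_cast hp.ne_zero)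
  rw [← h2]
  push_cast
  ring

lemma aux_coeff_pow_char {p : ℕ} (hp : p.Prime) {R : Type*} [CommRing R] [CharP R p]
    (f : R[X]) (k : ℕ) : (f ^ p).coeff (k * p) = (f.coeff k) ^ p := by
  haveI := Fact.mk hp
  rw [← Polynomial.map_frobenius_expand p f, coeff_map, Polynomial.coeff_expand hp.pos]
  simp [Nat.dvd_mul_left, Nat.mul_div_cancel _ hp.pos, frobenius_def]

/-- The key coefficient identity behind the Cartier operator fixing logarithmic
differentials: the coefficient of `X ^ (q*p + (p-1))` in `P^(p-1) * P'` is the `p`-th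
power of the coefficient of `X ^ q` in `P'`. -/
lemma aux_keycoeff {p : ℕ} (hp : p.Prime) {R : Type*} [CommRing R] [CharP R p]
    (P : R[X]) (q : ℕ) :
    (P ^ (p - 1) * derivative P).coeff (q * p + (p - 1))
      = ((derivative P).coeff q) ^ p := by
  set A := MvPolynomial ℕ ℤ
  set ψ : A →+* R := (MvPolynomial.eval₂Hom (Int.castRingHom R) fun n => P.coeff n)
  set T : A[X] := ∑ i ∈ Finset.range (P.natDegree + 1),
      Polynomial.C (MvPolynomial.X i) * Polynomial.X ^ i with hT
  have hmap : Polynomial.map ψ T = P := by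
    ext n
    rw [coeff_map, hT]
    simp only [Polynomial.finset_sum_coeff, Polynomial.coeff_C_mul, Polynomial.coeff_X_pow,
      mul_ite, mul_one, mul_zero]
    rw [Finset.sum_ite_eq (Finset.range (P.natDegree + 1))]
    by_cases hn : n ∈ Finset.range (P.natDegree + 1)
    · simp only [hn, if_true]
      exact MvPolynomial.eval₂Hom_X' _ _ _
    · simp only [hn, if_false, map_zero]
      rw [Finset.mem_range, not_lt] at hn
      exact (Polynomial.coeff_eq_zero_of_natDegree_lt hn).symm
  have key := aux_coeff_id hp T q
  have h1 : P ^ (p - 1) * derivative P = Polynomial.map ψ (T ^ (p - 1) * derivative T) := by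
    rw [Polynomial.map_mul, Polynomial.map_pow, ← Polynomial.derivative_map, hmap]
  have h2 : P ^ p = Polynomial.map ψ (T ^ p) := by rw [Polynomial.map_pow, hmap]
  rw [h1, coeff_map, key, map_mul, ← coeff_map, ← h2,
    aux_coeff_pow_char hp, coeff_derivative]
  haveI := Fact.mk hp
  have hfix : ((q + 1 : ℕ) : R) ^ p = ((q + 1 : ℕ) : R) := map_natCast (frobenius R p) (q + 1)
  have hq1 : ψ ((q : A) + 1) = ((q : R) + 1) := by
    rw [← Nat.cast_one, ← Nat.cast_add, map_natCast ψ]; push_cast; ring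
  rw [hq1, mul_pow, ← Nat.cast_one, ← Nat.cast_add, hfix]
  ring

variable {F : Type*} [Field F] {Ω : Type*} [AddCommGroup Ω] [Module F Ω]

omit [Module F Ω] in
lemma aux_d_zero (d : F → Ω) (hd_add : ∀ a b : F, d (a + b) = d a + d b) : d 0 = 0 := by
  have := hd_add 0 0
  rw [add_zero] at this
  exact (left_eq_add.mp this)

lemma aux_d_one (d : F → Ω) (hd_mul : ∀ a b : F, d (a * b) = a • d b + b • d a) : d 1 = 0 := by
  have := hd_mul 1 1
  rw [mul_one, one_smul] at this
  exact (left_eq_add.mp this)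

lemma aux_d_pow (d : F → Ω) (hd_mul : ∀ a b : F, d (a * b) = a • d b + b • d a)
    (a : F) (n : ℕ) : d (a ^ n) = ((n : F) * a ^ (n - 1)) • d a := by
  induction n with
  | zero => simp [aux_d_one d hd_mul]
  | succ n ih =>
    rw [pow_succ, hd_mul, ih, smul_smul, ← add_smul]
    have key : a ^ n + a * ((n : F) * a ^ (n - 1)) = ((n : F) + 1) * a ^ n := by
      cases n with
      | zero => simp
      | succ m => rw [Nat.add_sub_cancel]; ring
    rw [key, Nat.add_sub_cancel, Nat.cast_succ]

omit [Module F Ω] in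
lemma aux_d_sum (d : F → Ω) (hd_add : ∀ a b : F, d (a + b) = d a + d b)
    {ι : Type*} (s : Finset ι) (f : ι → F) :
    d (∑ i ∈ s, f i) = ∑ i ∈ s, d (f i) := by
  induction s using Finset.cons_induction with
  | empty => simp [aux_d_zero d hd_add]
  | cons i s hi ih => rw [Finset.sum_cons, hd_add, ih, Finset.sum_cons]

lemma aux_sum_range_mul {M : Type*} [AddCommMonoid M] (f : ℕ → M) (N p : ℕ) :
    ∑ m ∈ Finset.range (N * p), f m
      = ∑ q ∈ Finset.range N, ∑ r ∈ Finset.range p, f (q * p + r) := by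
  induction N with
  | zero => simp
  | succ n ih => rw [Nat.succ_mul, Finset.sum_range_add, ih, Finset.sum_range_succ]

end CartierAux

/-- Logarithmic differentials are fixed by the Cartier operator:
for any nonzero `h ∈ F`, `C(dh/h) = dh/h`. -/
theorem cartier_fixes_logarithmic_differentials
    {p : ℕ} (hp : p.Prime)
    {F : Type*} [Field F] [CharP F p]
    {Ω : Type*} [AddCommGroup Ω] [Module F Ω]
    -- the universal derivation on rational differential forms
    (d : F → Ω)
    (hd_add : ∀ a b : F, d (a + b) = d a + d b)
    (hd_mul : ∀ a b : F, d (a * b) = a • d b + b • d a)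
    -- a separating element `x`
    (x : F)
    (hbasis : ∀ ω : Ω, ∃! g : F, ω = g • d x)
    (hdec : ∀ g : F, ∃! c : Fin p → F, g = ∑ i : Fin p, (c i) ^ p * x ^ (i : ℕ))
    (C : Ω → Ω)
    (hC : ∀ c : Fin p → F,
      C ((∑ i : Fin p, (c i) ^ p * x ^ (i : ℕ)) • d x)
        = c ⟨p - 1, Nat.sub_lt hp.pos Nat.one_pos⟩ • d x) :
    ∀ h : F, h ≠ 0 → C (h⁻¹ • d h) = h⁻¹ • d h := by
  haveI := Fact.mk hp
  intro h hne
  obtain ⟨c, hc, -⟩ := hdec h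
  set φ : F →+* F := frobenius F p with hφ
  set Φ : F[X] →+* F := (Polynomial.evalRingHom x).comp (Polynomial.mapRingHom φ) with hΦdef
  have hΦ : ∀ Q : F[X], Φ Q = Polynomial.eval x (Q.map φ) := fun _ => rfl
  have hΦC : ∀ a : F, Φ (Polynomial.C a) = a ^ p := by
    intro a; rw [hΦ, map_C, eval_C, hφ, frobenius_def]
  have hΦX : Φ Polynomial.X = x := by rw [hΦ, map_X, eval_X]
  set P : F[X] := ∑ i : Fin p, Polynomial.C (c i) * Polynomial.X ^ (i : ℕ) with hP
  have hEP : Φ P = h := by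
    rw [hP, map_sum, hc]
    refine Finset.sum_congr rfl fun i _ => ?_
    rw [map_mul, map_pow, hΦC, hΦX]
  set g : F := Φ (Polynomial.derivative P) with hg
  have hnat : ∀ n : ℕ, ((n : F)) ^ p = (n : F) := fun n => map_natCast (frobenius F p) n
  -- d h = g • d x
  have hdh : d h = g • d x := by
    have hderiv : Polynomial.derivative P
        = ∑ i : Fin p, Polynomial.C (c i * ((i : ℕ) : F)) * Polynomial.X ^ ((i : ℕ) - 1) := by
      rw [hP, map_sum]
      exact Finset.sum_congr rfl fun i _ => Polynomial.derivative_C_mul_X_pow _ _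
    have hgval : g = ∑ i : Fin p, (c i) ^ p * (((i : ℕ) : F) * x ^ ((i : ℕ) - 1)) := by
      rw [hg, hderiv, map_sum]
      refine Finset.sum_congr rfl fun i _ => ?_
      rw [map_mul, map_pow, hΦC, hΦX, mul_pow, hnat]
      ring
    rw [hc, aux_d_sum d hd_add, hgval, Finset.sum_smul]
    refine Finset.sum_congr rfl fun i _ => ?_
    rw [hd_mul, aux_d_pow d hd_mul x (i : ℕ), aux_d_pow d hd_mul (c i) p,
      CharP.cast_eq_zero F p, zero_mul, zero_smul, smul_zero, add_zero, smul_smul]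
  -- the Cartier coefficient family
  set Q : F[X] := P ^ (p - 1) * Polynomial.derivative P with hQ
  set N : ℕ := Q.natDegree + 1 with hN
  set b : ℕ → F := fun r => ∑ q ∈ Finset.range N, Q.coeff (q * p + r) * x ^ q with hb
  have hQdeg : (Q.map φ).natDegree < N * p := by
    have h1 : (Q.map φ).natDegree ≤ Q.natDegree := Polynomial.natDegree_map_le
    have h2 : N ≤ N * p := Nat.le_mul_of_pos_right _ hp.pos
    omega
  have hbp : ∀ r : ℕ, (b r) ^ p = ∑ q ∈ Finset.range N, (Q.coeff (q * p + r)) ^ p * x ^ (q * p) := by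
    intro r
    have : (b r) ^ p = φ (b r) := by rw [hφ, frobenius_def]
    rw [this, hb, map_sum]
    refine Finset.sum_congr rfl fun q _ => ?_
    rw [hφ, frobenius_def, mul_pow, ← pow_mul]
  have hb1 : ∑ r ∈ Finset.range p, (b r) ^ p * x ^ r = h ^ (p - 1) * g := by
    have hEQ : Φ Q = h ^ (p - 1) * g := by rw [hQ, map_mul, map_pow, hEP, hg]
    rw [← hEQ, hΦ, Polynomial.eval_eq_sum_range' hQdeg, aux_sum_range_mul _ N p,
      Finset.sum_comm]
    refine Finset.sum_congr rfl fun r _ => ?_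
    rw [hbp r, Finset.sum_mul]
    refine Finset.sum_congr rfl fun q _ => ?_
    rw [Polynomial.coeff_map, hφ, frobenius_def, pow_add]
    ring
  have hb2 : b (p - 1) = g := by
    by_cases hP' : Polynomial.derivative P = 0
    · have hQ0 : Q = 0 := by rw [hQ, hP', mul_zero]
      rw [hg, hP', map_zero, hb]
      simp [hQ0]
    · have hPne : P ≠ 0 := fun hz => hP' (by rw [hz, map_zero])
      have hQne : Q ≠ 0 := mul_ne_zero (pow_ne_zero _ hPne) hP'
      have hdvd : Polynomial.derivative P ∣ Q := Dvd.intro_left _ rfl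
      have hdegle : (Polynomial.derivative P).natDegree < N := by
        have := Polynomial.natDegree_le_of_dvd hdvd hQne
        omega
      have hmapdeg : ((Polynomial.derivative P).map φ).natDegree < N :=
        lt_of_le_of_lt Polynomial.natDegree_map_le hdegle
      rw [hg, hΦ, Polynomial.eval_eq_sum_range' hmapdeg, hb]
      refine Finset.sum_congr rfl fun q _ => ?_
      rw [Polynomial.coeff_map, hφ, frobenius_def, ← aux_keycoeff hp P q, hQ]
  -- assemble
  have hpow := hC fun i => h⁻¹ * b (i : ℕ)
  simp only [] at hpow
  have hscal : ∑ i : Fin p, (h⁻¹ * b (i : ℕ)) ^ p * x ^ (i : ℕ) = h⁻¹ * g := by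
    have hterm : ∀ i : Fin p, (h⁻¹ * b (i : ℕ)) ^ p * x ^ (i : ℕ)
        = (h⁻¹) ^ p * ((b (i : ℕ)) ^ p * x ^ (i : ℕ)) := by
      intro i; rw [mul_pow]; ring
    rw [Finset.sum_congr rfl fun i _ => hterm i, ← Finset.mul_sum,
      Fin.sum_univ_eq_sum_range (fun r => (b r) ^ p * x ^ r) p, hb1]
    have hp1 : (p - 1) + 1 = p := Nat.succ_pred_eq_of_pos hp.pos
    have hinv : (h⁻¹) ^ p * h ^ (p - 1) = h⁻¹ := by
      have hsplit : (h⁻¹) ^ p = h⁻¹ ^ (p - 1) * h⁻¹ := by rw [← pow_succ, hp1]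
      rw [hsplit, mul_right_comm, ← mul_pow, inv_mul_cancel₀ hne, one_pow, one_mul]
    rw [← mul_assoc, hinv]
  rw [hscal] at hpow
  rw [hb2] at hpow
  rw [hdh, smul_smul]
  exact hpow
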